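/- Let G be a group acting on ℝ by K-bilipschitz orientation-preserving homeomorphisms with finite symmetric generating set 𝒢 and no global fixed point, let (x_n) be defined by x_0=0, x_{n+1} = max_{g∈𝒢} g(x_n), and let φ be the homeomorphism mapping x_n to n and affine on each [x_n, x_{n+1}]. Then for every g ∈ 𝒢, the conjugate ρ(g) = φ ∘ g ∘ φ⁻¹ is K³-bilipschitz. -/

import Mathlib

open Set Filter

noncomputable section

private lemma chain3_aux (f : ℝ → ℝ) {a b c d : ℝ} (hbc : b ≤ c) {C : ℝ}
    (h1 : ∀ u v, a ≤ u → u ≤ v → v ≤ b → f v - f u ≤ C * (v - u))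
    (h2 : ∀ u v, b ≤ u → u ≤ v → v ≤ c → f v - f u ≤ C * (v - u))
    (h3 : ∀ u v, c ≤ u → u ≤ v → v ≤ d → f v - f u ≤ C * (v - u)) :
    ∀ u v, a ≤ u → u ≤ v → v ≤ d → f v - f u ≤ C * (v - u) := by
  intro u v hau huv hvd
  set p := min v (max u b) with hp
  set q := min v (max u c) with hq
  have hup : u ≤ p := le_min huv (le_max_left u b)
  have hpq : p ≤ q := min_le_min le_rfl (max_le_max le_rfl hbc)
  have hqv : q ≤ v := min_le_left _ _
  have bnd1 : f p - f u ≤ C * (p - u) := by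
    rcases le_or_gt b u with hbu | hub'
    · have hpu : p = u := le_antisymm (le_trans (min_le_right _ _) (le_of_eq (max_eq_left hbu))) hup
      rw [hpu]; simp
    · exact h1 u p hau hup (le_trans (min_le_right _ _) (le_of_eq (max_eq_right hub'.le)))
  have bnd2 : f q - f p ≤ C * (q - p) := by
    rcases le_or_gt v b with hvb | hvb
    · have hp' : p = v := min_eq_left (hvb.trans (le_max_right u b))
      have hq' : q = v := min_eq_left ((hvb.trans hbc).trans (le_max_right u c))
      rw [hp', hq']; simp
    · rcases le_or_gt c u with hcu | hcu
      · have hp' : p = u := by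
          rw [hp, max_eq_left (hbc.trans hcu), min_eq_right huv]
        have hq' : q = u := by
          rw [hq, max_eq_left hcu, min_eq_right huv]
        rw [hp', hq']; simp
      · exact h2 p q (le_min hvb.le (le_max_right u b)) hpq
          (le_trans (min_le_right _ _) (le_of_eq (max_eq_right hcu.le)))
  have bnd3 : f v - f q ≤ C * (v - q) := by
    rcases le_or_gt v c with hvc | hvc
    · have hq' : q = v := min_eq_left (hvc.trans (le_max_right u c))
      rw [hq']; simp
    · exact h3 q v (le_min hvc.le (le_max_right u c)) hqv hvd
  linarith

private lemma chainZ_aux (f : ℝ → ℝ) (C : ℝ)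
    (h : ∀ n : ℤ, ∀ u v : ℝ, (n : ℝ) ≤ u → u ≤ v → v ≤ (n : ℝ) + 1 → f v - f u ≤ C * (v - u)) :
    ∀ u v : ℝ, u ≤ v → f v - f u ≤ C * (v - u) := by
  have key : ∀ k : ℕ, ∀ u v : ℝ, u ≤ v → ⌊v⌋ ≤ ⌊u⌋ + k → f v - f u ≤ C * (v - u) := by
    intro k
    induction k with
    | zero =>
      intro u v huv hk
      have h1 : (⌊v⌋ : ℝ) ≤ (⌊u⌋ : ℝ) := by exact_mod_cast (by omega : ⌊v⌋ ≤ ⌊u⌋)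
      have h2 := Int.lt_floor_add_one v
      exact h ⌊u⌋ u v (Int.floor_le u) huv (by linarith)
    | succ k ih =>
      intro u v huv hk
      rcases le_or_gt ⌊v⌋ (⌊u⌋ + k) with h' | h'
      · exact ih u v huv h'
      · have h1 : ⌊u⌋ + 1 ≤ ⌊v⌋ := by omega
        have hum : u ≤ (⌊u⌋ : ℝ) + 1 := (Int.lt_floor_add_one u).le
        have hmv : (⌊u⌋ : ℝ) + 1 ≤ v := by
          have h2 : ((⌊u⌋ : ℝ) + 1) ≤ (⌊v⌋ : ℝ) := by exact_mod_cast h1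
          linarith [Int.floor_le v]
        have b1 : f ((⌊u⌋ : ℝ) + 1) - f u ≤ C * (((⌊u⌋ : ℝ) + 1) - u) :=
          h ⌊u⌋ u _ (Int.floor_le u) hum le_rfl
        have hfm : ⌊(⌊u⌋ : ℝ) + 1⌋ = ⌊u⌋ + 1 := by
          rw [show ((⌊u⌋ : ℝ) + 1) = ((⌊u⌋ + 1 : ℤ) : ℝ) by push_cast; ring, Int.floor_intCast]
        have b2 : f v - f ((⌊u⌋ : ℝ) + 1) ≤ C * (v - ((⌊u⌋ : ℝ) + 1)) :=
          ih _ v hmv (by rw [hfm]; omega)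
        linarith
  intro u v huv
  exact key (⌊v⌋ - ⌊u⌋).toNat u v huv (by have := Int.floor_le_floor huv; omega)

private lemma slope_le_aux {dm d K w : ℝ} (hdm : 0 < dm) (hd : 0 < d) (hw : 0 ≤ w)
    (h : d ≤ K * dm) : w / dm ≤ K / d * w := by
  rw [div_le_iff₀ hdm, div_mul_eq_mul_div, div_mul_eq_mul_div, le_div_iff₀ hd]
  nlinarith

private lemma slope_ge_aux {dm d K w : ℝ} (hdm : 0 < dm) (hd : 0 < d) (hK : 0 < K) (hw : 0 ≤ w)
    (h : dm ≤ K * d) : 1 / (K * d) * w ≤ w / dm := by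
  rw [div_mul_eq_mul_div, div_le_div_iff₀ (by positivity) hdm]
  nlinarith

set_option maxHeartbeats 2000000 in
/-- Conjugating a `K`-bilipschitz action (finite symmetric generating set `𝒢`, no global
fixed point) by the piecewise-affine homeomorphism `φ` sending `x_n` to `n` yields
generators `ρ(g) = φ ∘ g ∘ φ⁻¹` that are `K³`-bilipschitz. -/
theorem conjugated_generators_bilipschitz
    (S : Finset (ℝ ≃ₜ ℝ)) (hne : S.Nonempty)
    (hmono : ∀ g ∈ S, Monotone ⇑g) (K : ℝ) (hK : 1 ≤ K)
    (hbil : ∀ g ∈ S, ∀ x y : ℝ, K⁻¹ * |y - x| ≤ |g y - g x| ∧ |g y - g x| ≤ K * |y - x|)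
    (hsym : ∀ g ∈ S, g.symm ∈ S)
    (hnofix : ∀ p : ℝ, ∃ g ∈ S, g p ≠ p)
    (x : ℤ → ℝ) (hx0 : x 0 = 0)
    (hxrec : ∀ n : ℤ, IsGreatest {y : ℝ | ∃ g ∈ S, y = g (x n)} (x (n + 1)))
    (φ : ℝ ≃ₜ ℝ)
    (hφ : ∀ n : ℤ, ∀ t ∈ Icc (x n) (x (n + 1)),
      φ t = (n : ℝ) + (t - x n) / (x (n + 1) - x n))
    :
    ∀ g ∈ S, ∀ s t : ℝ,
      (K ^ 3)⁻¹ * |t - s| ≤ |φ (g (φ.symm t)) - φ (g (φ.symm s))| ∧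
      |φ (g (φ.symm t)) - φ (g (φ.symm s))| ≤ K ^ 3 * |t - s| := by
  have hK0 : (0 : ℝ) < K := lt_of_lt_of_le one_pos hK
  -- basic facts about the sequence x
  have hub : ∀ n : ℤ, ∀ g ∈ S, g (x n) ≤ x (n + 1) := fun n g hg => (hxrec n).2 ⟨g, hg, rfl⟩
  have hattain : ∀ n : ℤ, ∃ g ∈ S, x (n + 1) = g (x n) := fun n => (hxrec n).1
  have hxlt : ∀ n : ℤ, x n < x (n + 1) := by
    intro n
    obtain ⟨g0, hg0, hne0⟩ := hnofix (x n)
    rcases lt_or_gt_of_ne hne0 with h | h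
    · have hsm : StrictMono ⇑g0 := (hmono g0 hg0).strictMono_of_injective g0.injective
      have h2 : x n < g0.symm (x n) := by
        have h3 : g0 (x n) < g0 (g0.symm (x n)) := by
          rwa [Homeomorph.apply_symm_apply]
        exact hsm.lt_iff_lt.mp h3
      exact lt_of_lt_of_le h2 (hub n g0.symm (hsym g0 hg0))
    · exact lt_of_lt_of_le h (hub n g0 hg0)
  have hδpos : ∀ n : ℤ, 0 < x (n + 1) - x n := fun n => sub_pos.2 (hxlt n)
  -- bilipschitz without absolute values
  have hbil' : ∀ g ∈ S, ∀ a b : ℝ, a ≤ b →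
      K⁻¹ * (b - a) ≤ g b - g a ∧ g b - g a ≤ K * (b - a) := by
    intro g hg a b hab
    have h1 := hbil g hg a b
    have h2 : (0:ℝ) ≤ g b - g a := sub_nonneg.2 (hmono g hg hab)
    rwa [abs_of_nonneg (sub_nonneg.2 hab), abs_of_nonneg h2] at h1
  -- gap ratios
  have hrat1 : ∀ n : ℤ, x (n + 1 + 1) - x (n + 1) ≤ K * (x (n + 1) - x n) := by
    intro n
    obtain ⟨h, hh, hhx⟩ := hattain (n + 1)
    have h1 : h (x n) ≤ x (n + 1) := hub n h hh
    have h2 := (hbil' h hh (x n) (x (n + 1)) (hxlt n).le).2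
    rw [hhx]
    linarith
  have hrat2 : ∀ n : ℤ, x (n + 1) - x n ≤ K * (x (n + 1 + 1) - x (n + 1)) := by
    intro n
    obtain ⟨g0, hg0, hg0x⟩ := hattain n
    have h1 : g0 (x (n + 1)) ≤ x (n + 1 + 1) := hub (n + 1) g0 hg0
    have h2 := (hbil' g0 hg0 (x n) (x (n + 1)) (hxlt n).le).1
    rw [← hg0x] at h2
    have h3 : K⁻¹ * (x (n + 1) - x n) ≤ x (n + 1 + 1) - x (n + 1) := by linarith
    calc x (n + 1) - x n = K * (K⁻¹ * (x (n + 1) - x n)) := by field_simp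
      _ ≤ K * (x (n + 1 + 1) - x (n + 1)) := mul_le_mul_of_nonneg_left h3 hK0.le
  -- index normalization helpers
  have eR : ∀ n : ℤ, x (n - 1 + 1) = x n := fun n => congrArg x (by ring)
  have eR2 : ∀ n : ℤ, x (n - 1 + 1 + 1) = x (n + 1) := fun n => congrArg x (by ring)
  -- exact slope of φ on each interval
  have hslope : ∀ m : ℤ, ∀ u v : ℝ, x m ≤ u → u ≤ v → v ≤ x (m + 1) →
      φ v - φ u = (v - u) / (x (m + 1) - x m) := by
    intro m u v h1 h2 h3
    rw [hφ m u ⟨h1, h2.trans h3⟩, hφ m v ⟨h1.trans h2, h3⟩]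
    have hne : x (m + 1) - x m ≠ 0 := (hδpos m).ne'
    field_simp
    ring
  -- explicit formula for φ.symm on [n, n+1]
  have hsymm_eq : ∀ n : ℤ, ∀ s : ℝ, (n : ℝ) ≤ s → s ≤ (n : ℝ) + 1 →
      φ.symm s = x n + (s - (n : ℝ)) * (x (n + 1) - x n) := by
    intro n s h1 h2
    have hδ := hδpos n
    have hmem : x n + (s - (n : ℝ)) * (x (n + 1) - x n) ∈ Icc (x n) (x (n + 1)) :=
      ⟨by nlinarith, by nlinarith⟩
    have hval : φ (x n + (s - (n : ℝ)) * (x (n + 1) - x n)) = s := by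
      rw [hφ n _ hmem]
      have hne : x (n + 1) - x n ≠ 0 := hδ.ne'
      field_simp
      ring
    conv_lhs => rw [← hval]
    rw [Homeomorph.symm_apply_apply]
  -- image bounds
  have himg_lo : ∀ g ∈ S, ∀ n : ℤ, x (n - 1) ≤ g (x n) := by
    intro g hg n
    have h1 : g.symm (x (n - 1)) ≤ x (n - 1 + 1) := hub (n - 1) g.symm (hsym g hg)
    rw [eR n] at h1
    have h2 := hmono g hg h1
    rwa [Homeomorph.apply_symm_apply] at h2
  -- main part
  intro g hg s t
  -- per-unit-interval upper estimate for the conjugated map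
  have keyUp : ∀ n : ℤ, ∀ u v : ℝ, (n : ℝ) ≤ u → u ≤ v → v ≤ (n : ℝ) + 1 →
      φ (g (φ.symm v)) - φ (g (φ.symm u)) ≤ K ^ 3 * (v - u) := by
    intro n u v h1 h2 h3
    have hδ := hδpos n
    have d1 : 0 < x n - x (n - 1) := by have := hδpos (n - 1); rwa [eR n] at this
    have d3 : 0 < x (n + 1 + 1) - x (n + 1) := hδpos (n + 1)
    have rA : x (n + 1) - x n ≤ K * (x n - x (n - 1)) := by
      have := hrat1 (n - 1); rwa [eR2 n, eR n] at this
    have rC : x (n + 1) - x n ≤ K * (x (n + 1 + 1) - x (n + 1)) := hrat2 n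
    have ha := hsymm_eq n u h1 (h2.trans h3)
    have hb := hsymm_eq n v (h1.trans h2) h3
    have haI : x n ≤ φ.symm u ∧ φ.symm u ≤ x (n + 1) := by
      constructor <;> rw [ha] <;> nlinarith
    have hbI : x n ≤ φ.symm v ∧ φ.symm v ≤ x (n + 1) := by
      constructor <;> rw [hb] <;> nlinarith
    have hale : φ.symm u ≤ φ.symm v := by rw [ha, hb]; nlinarith
    have hdiff : φ.symm v - φ.symm u = (v - u) * (x (n + 1) - x n) := by
      rw [ha, hb]; ring
    have hga_lo : x (n - 1) ≤ g (φ.symm u) := le_trans (himg_lo g hg n) (hmono g hg haI.1)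
    have hgb_hi : g (φ.symm v) ≤ x (n + 1 + 1) := le_trans (hmono g hg hbI.2) (hub (n + 1) g hg)
    have hgab : g (φ.symm u) ≤ g (φ.symm v) := hmono g hg hale
    have hgd : g (φ.symm v) - g (φ.symm u) ≤ K * (φ.symm v - φ.symm u) :=
      (hbil' g hg _ _ hale).2
    -- slope bound for φ on [x (n-1), x (n+1+1)]
    have HC : ∀ w1 w2 : ℝ, x (n - 1) ≤ w1 → w1 ≤ w2 → w2 ≤ x (n + 1 + 1) →
        φ w2 - φ w1 ≤ (K / (x (n + 1) - x n)) * (w2 - w1) := by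
      apply chain3_aux φ (hxlt n).le
      · intro w1 w2 hw1 hw12 hw2
        rw [hslope (n - 1) w1 w2 hw1 hw12 (by rw [eR n]; exact hw2), eR n]
        exact slope_le_aux d1 hδ (by linarith) rA
      · intro w1 w2 hw1 hw12 hw2
        rw [hslope n w1 w2 hw1 hw12 hw2]
        exact slope_le_aux hδ hδ (by linarith) (by nlinarith)
      · intro w1 w2 hw1 hw12 hw2
        rw [hslope (n + 1) w1 w2 hw1 hw12 hw2]
        exact slope_le_aux d3 hδ (by linarith) rC
    have H := HC (g (φ.symm u)) (g (φ.symm v)) hga_lo hgab hgb_hi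
    have H2 : (K / (x (n + 1) - x n)) * (g (φ.symm v) - g (φ.symm u)) ≤
        (K / (x (n + 1) - x n)) * (K * ((v - u) * (x (n + 1) - x n))) := by
      apply mul_le_mul_of_nonneg_left _ (div_nonneg hK0.le hδ.le)
      rw [← hdiff]; exact hgd
    have H3 : (K / (x (n + 1) - x n)) * (K * ((v - u) * (x (n + 1) - x n))) = K ^ 2 * (v - u) := by
      field_simp
    have H4 : K ^ 2 * (v - u) ≤ K ^ 3 * (v - u) := by
      nlinarith [mul_nonneg (mul_nonneg (sq_nonneg K) (by linarith : (0:ℝ) ≤ K - 1))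
        (by linarith : (0:ℝ) ≤ v - u)]
    linarith [H3 ▸ H2]
  -- per-unit-interval lower estimate
  have keyLo : ∀ n : ℤ, ∀ u v : ℝ, (n : ℝ) ≤ u → u ≤ v → v ≤ (n : ℝ) + 1 →
      (K ^ 3)⁻¹ * (v - u) ≤ φ (g (φ.symm v)) - φ (g (φ.symm u)) := by
    intro n u v h1 h2 h3
    have hδ := hδpos n
    have d1 : 0 < x n - x (n - 1) := by have := hδpos (n - 1); rwa [eR n] at this
    have d3 : 0 < x (n + 1 + 1) - x (n + 1) := hδpos (n + 1)
    have rB : x n - x (n - 1) ≤ K * (x (n + 1) - x n) := by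
      have := hrat2 (n - 1); rwa [eR n, eR2 n] at this
    have rD : x (n + 1 + 1) - x (n + 1) ≤ K * (x (n + 1) - x n) := hrat1 n
    have ha := hsymm_eq n u h1 (h2.trans h3)
    have hb := hsymm_eq n v (h1.trans h2) h3
    have haI : x n ≤ φ.symm u ∧ φ.symm u ≤ x (n + 1) := by
      constructor <;> rw [ha] <;> nlinarith
    have hbI : x n ≤ φ.symm v ∧ φ.symm v ≤ x (n + 1) := by
      constructor <;> rw [hb] <;> nlinarith
    have hale : φ.symm u ≤ φ.symm v := by rw [ha, hb]; nlinarith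
    have hdiff : φ.symm v - φ.symm u = (v - u) * (x (n + 1) - x n) := by
      rw [ha, hb]; ring
    have hga_lo : x (n - 1) ≤ g (φ.symm u) := le_trans (himg_lo g hg n) (hmono g hg haI.1)
    have hgb_hi : g (φ.symm v) ≤ x (n + 1 + 1) := le_trans (hmono g hg hbI.2) (hub (n + 1) g hg)
    have hgab : g (φ.symm u) ≤ g (φ.symm v) := hmono g hg hale
    have hgd : K⁻¹ * (φ.symm v - φ.symm u) ≤ g (φ.symm v) - g (φ.symm u) :=
      (hbil' g hg _ _ hale).1
    -- lower slope bound for φ on [x (n-1), x (n+1+1)] via chain3 applied to -φ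
    have HC : ∀ w1 w2 : ℝ, x (n - 1) ≤ w1 → w1 ≤ w2 → w2 ≤ x (n + 1 + 1) →
        (fun w => -(φ w)) w2 - (fun w => -(φ w)) w1 ≤
          (-(1 / (K * (x (n + 1) - x n)))) * (w2 - w1) := by
      apply chain3_aux (fun w => -(φ w)) (hxlt n).le
      · intro w1 w2 hw1 hw12 hw2
        have hs := hslope (n - 1) w1 w2 hw1 hw12 (by rw [eR n]; exact hw2)
        rw [eR n] at hs
        have := slope_ge_aux d1 hδ hK0 (by linarith : (0:ℝ) ≤ w2 - w1) rB
        linarith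
      · intro w1 w2 hw1 hw12 hw2
        have hs := hslope n w1 w2 hw1 hw12 hw2
        have := slope_ge_aux hδ hδ hK0 (by linarith : (0:ℝ) ≤ w2 - w1) (by nlinarith)
        linarith
      · intro w1 w2 hw1 hw12 hw2
        have hs := hslope (n + 1) w1 w2 hw1 hw12 hw2
        have := slope_ge_aux d3 hδ hK0 (by linarith : (0:ℝ) ≤ w2 - w1) rD
        linarith
    have H := HC (g (φ.symm u)) (g (φ.symm v)) hga_lo hgab hgb_hi
    -- H : -(φ (g (φ.symm v))) - -(φ (g (φ.symm u))) ≤ -(1/(K*δ)) * (g (φ.symm v) - g (φ.symm u))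
    have H' : 1 / (K * (x (n + 1) - x n)) * (g (φ.symm v) - g (φ.symm u)) ≤
        φ (g (φ.symm v)) - φ (g (φ.symm u)) := by linarith
    have H2 : 1 / (K * (x (n + 1) - x n)) * (K⁻¹ * ((v - u) * (x (n + 1) - x n))) ≤
        1 / (K * (x (n + 1) - x n)) * (g (φ.symm v) - g (φ.symm u)) := by
      apply mul_le_mul_of_nonneg_left _ (one_div_nonneg.mpr (mul_pos hK0 hδ).le)
      rw [← hdiff]
      exact hgd
    have H3 : 1 / (K * (x (n + 1) - x n)) * (K⁻¹ * ((v - u) * (x (n + 1) - x n))) =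
        (K ^ 2)⁻¹ * (v - u) := by
      field_simp
    have H4 : (K ^ 3)⁻¹ * (v - u) ≤ (K ^ 2)⁻¹ * (v - u) := by
      apply mul_le_mul_of_nonneg_right _ (by linarith)
      exact inv_anti₀ (by nlinarith) (by nlinarith)
    linarith [H3 ▸ H2]
  -- globalize
  have HUp : ∀ u v : ℝ, u ≤ v →
      φ (g (φ.symm v)) - φ (g (φ.symm u)) ≤ K ^ 3 * (v - u) :=
    chainZ_aux (fun w => φ (g (φ.symm w))) (K ^ 3) keyUp
  have HLo : ∀ u v : ℝ, u ≤ v →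
      (K ^ 3)⁻¹ * (v - u) ≤ φ (g (φ.symm v)) - φ (g (φ.symm u)) := by
    intro u v huv
    have := chainZ_aux (fun w => -(φ (g (φ.symm w)))) (-(K ^ 3)⁻¹)
      (by
        intro n w1 w2 a b c
        have := keyLo n w1 w2 a b c
        linarith) u v huv
    linarith [this]
  rcases le_total s t with hst | hst
  · have h1 := HUp s t hst
    have h2 := HLo s t hst
    have hd : (0:ℝ) ≤ t - s := by linarith
    have hpos : (0:ℝ) ≤ φ (g (φ.symm t)) - φ (g (φ.symm s)) :=
      le_trans (mul_nonneg (inv_nonneg.mpr (pow_nonneg hK0.le 3)) hd) h2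
    rw [abs_of_nonneg hd, abs_of_nonneg hpos]
    exact ⟨h2, h1⟩
  · have h1 := HUp t s hst
    have h2 := HLo t s hst
    have hd : (0:ℝ) ≤ s - t := by linarith
    have hpos : (0:ℝ) ≤ φ (g (φ.symm s)) - φ (g (φ.symm t)) :=
      le_trans (mul_nonneg (inv_nonneg.mpr (pow_nonneg hK0.le 3)) hd) h2
    rw [show |t - s| = s - t by rw [abs_sub_comm]; exact abs_of_nonneg hd,
      show |φ (g (φ.symm t)) - φ (g (φ.symm s))| = φ (g (φ.symm s)) - φ (g (φ.symm t)) by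
        rw [abs_sub_comm]; exact abs_of_nonneg hpos]
    exact ⟨h2, h1⟩
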